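/- Let V₂ ⊂ GF(3)^4 be a 2-dimensional subspace such that the corresponding projective line has weight pattern (0,3,1,0), i.e. among its four projective points exactly three are spanned by weight-2 vectors and one by a weight-3 vector. Then there is a unique pair {λ, 2λ} of weight-3 vectors in V₂, and the coset decomposition of V₂ by the subspace {0, λ, 2λ} partitions V₂ into three 3-element sets, within each of which any two distinct elements are at Hamming distance 3. -/
import Mathlib

def wt (v : Fin 4 → ZMod 3) : ℕ := (Finset.univ.filter fun i => v i ≠ 0).card

lemma wt_smul2 (v : Fin 4 → ZMod 3) : wt ((2 : ZMod 3) • v) = wt v := by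
  unfold wt
  congr 1
  ext i
  simp only [Finset.mem_filter, Finset.mem_univ, true_and, Pi.smul_apply, smul_eq_mul]
  exact (by decide : ∀ x : ZMod 3, 2 * x ≠ 0 ↔ x ≠ 0) (v i)

lemma wt_zero' : wt (0 : Fin 4 → ZMod 3) = 0 := by decide

/-- Let `V₂ ⊂ GF(3)^4` be a 2-dimensional subspace whose projective line has weight
pattern `(0,3,1,0)` (i.e. it contains no vectors of weight 1 or 4, six of weight 2 and
two of weight 3).  Then there is a unique pair `{λ, 2λ}` of weight-3 vectors in `V₂`,
and the cosets of `{0, λ, 2λ}` partition `V₂` into three 3-element sets, within each of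
which any two distinct elements are at Hamming distance 3. -/
theorem stmt17 (V₂ : Submodule (ZMod 3) (Fin 4 → ZMod 3))
    (hdim : Module.finrank (ZMod 3) V₂ = 2)
    (h1 : Nat.card {v | v ∈ V₂ ∧ wt v = 1} = 0)
    (h2 : Nat.card {v | v ∈ V₂ ∧ wt v = 2} = 6)
    (h3 : Nat.card {v | v ∈ V₂ ∧ wt v = 3} = 2)
    (h4 : Nat.card {v | v ∈ V₂ ∧ wt v = 4} = 0) :
    ∃ lam ∈ V₂, wt lam = 3 ∧ lam ≠ (2 : ZMod 3) • lam ∧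
      {v | v ∈ V₂ ∧ wt v = 3} = ({lam, (2 : ZMod 3) • lam} : Set (Fin 4 → ZMod 3)) ∧
      Nat.card {s : Set (Fin 4 → ZMod 3) |
        ∃ v ∈ V₂, s = {v, v + lam, v + (2 : ZMod 3) • lam}} = 3 ∧
      (∀ s : Set (Fin 4 → ZMod 3),
        (∃ v ∈ V₂, s = {v, v + lam, v + (2 : ZMod 3) • lam}) →
          Nat.card s = 3 ∧ s ⊆ V₂ ∧
          ∀ ρ ∈ s, ∀ σ ∈ s, ρ ≠ σ → wt (ρ - σ) = 3) ∧
      ⋃₀ {s : Set (Fin 4 → ZMod 3) |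
        ∃ v ∈ V₂, s = {v, v + lam, v + (2 : ZMod 3) • lam}} = (V₂ : Set (Fin 4 → ZMod 3)) ∧
      (∀ s t : Set (Fin 4 → ZMod 3),
        (∃ v ∈ V₂, s = {v, v + lam, v + (2 : ZMod 3) • lam}) →
        (∃ v ∈ V₂, t = {v, v + lam, v + (2 : ZMod 3) • lam}) →
        s ≠ t → s ∩ t = ∅) := by
  classical
  have hZ3 : ∀ c : ZMod 3, c = 0 ∨ c = 1 ∨ c = 2 := by decide
  -- extract the weight-3 vector lam =: a
  have h3' : {v | v ∈ V₂ ∧ wt v = 3}.ncard = 2 := by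
    rw [← Nat.card_coe_set_eq]; exact h3
  obtain ⟨a, b, hab, hset⟩ := Set.ncard_eq_two.mp h3'
  have ha : a ∈ {v | v ∈ V₂ ∧ wt v = 3} := by rw [hset]; exact Set.mem_insert _ _
  obtain ⟨haV, hwt⟩ := ha
  have hlam0 : a ≠ 0 := by
    intro h; rw [h, wt_zero'] at hwt; exact absurd hwt (by norm_num)
  have hwt2a : wt ((2 : ZMod 3) • a) = 3 := by rw [wt_smul2]; exact hwt
  have h2a : (2 : ZMod 3) • a ∈ {v | v ∈ V₂ ∧ wt v = 3} :=
    ⟨V₂.smul_mem _ haV, hwt2a⟩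
  have hne2 : a ≠ (2 : ZMod 3) • a := by
    intro h
    apply hlam0
    funext i
    have hi := congrFun h i
    simp only [Pi.smul_apply, smul_eq_mul] at hi
    exact (by decide : ∀ x : ZMod 3, x = 2 * x → x = 0) (a i) hi
  have hb : b = (2 : ZMod 3) • a := by
    rw [hset] at h2a
    rcases h2a with h | h
    · exact absurd h.symm hne2
    · exact h.symm
  have hset2 : {v | v ∈ V₂ ∧ wt v = 3} = ({a, (2 : ZMod 3) • a} : Set (Fin 4 → ZMod 3)) := by
    rw [hset, hb]
  -- find μ outside the span of a
  have hμex : ∃ μ ∈ V₂, μ ∉ Submodule.span (ZMod 3) {a} := by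
    by_contra h
    push_neg at h
    have hle : V₂ ≤ Submodule.span (ZMod 3) {a} := h
    have hmono := Submodule.finrank_mono hle
    rw [hdim, finrank_span_singleton hlam0] at hmono
    omega
  obtain ⟨μ, hμV, hμ⟩ := hμex
  -- every element of V₂ is p.1 • a + p.2 • μ
  have hrep : ∀ v ∈ V₂, ∃ p : ZMod 3 × ZMod 3, p.1 • a + p.2 • μ = v := by
    set f : ZMod 3 × ZMod 3 → V₂ := fun p =>
      ⟨p.1 • a + p.2 • μ, V₂.add_mem (V₂.smul_mem _ haV) (V₂.smul_mem _ hμV)⟩ with hf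
    have hinj : Function.Injective f := by
      intro p q hpq
      have h : p.1 • a + p.2 • μ = q.1 • a + q.2 • μ := congrArg Subtype.val hpq
      have key : (p.2 - q.2) • μ = (q.1 - p.1) • a := funext fun i => by
        have hi := congrFun h i
        simp only [Pi.add_apply, Pi.smul_apply, Pi.sub_apply, smul_eq_mul] at hi ⊢
        exact (by decide : ∀ p1 p2 q1 q2 x m : ZMod 3,
          p1 * x + p2 * m = q1 * x + q2 * m → (p2 - q2) * m = (q1 - p1) * x)
          p.1 p.2 q.1 q.2 (a i) (μ i) hi
      have h22 : p.2 = q.2 := by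
        by_contra hne
        have hz : p.2 - q.2 ≠ 0 := sub_ne_zero.mpr hne
        apply hμ
        have hμeq : μ = (p.2 - q.2)⁻¹ • ((q.1 - p.1) • a) := by
          rw [← key, smul_smul, inv_mul_cancel₀ hz, one_smul]
        rw [hμeq]
        exact Submodule.smul_mem _ _ (Submodule.smul_mem _ _ (Submodule.mem_span_singleton_self a))
      rw [h22, sub_self, zero_smul] at key
      have h11 : q.1 - p.1 = 0 := by
        rcases smul_eq_zero.mp key.symm with h | h
        · exact h
        · exact absurd h hlam0
      exact Prod.ext (sub_eq_zero.mp h11).symm h22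
    have hcardV : Nat.card V₂ = 9 := by
      letI : Fintype V₂ := Fintype.ofFinite _
      rw [Nat.card_eq_fintype_card]
      have := Module.card_eq_pow_finrank (K := ZMod 3) (V := V₂)
      rw [hdim, ZMod.card] at this
      simpa using this
    have hcardP : Nat.card (ZMod 3 × ZMod 3) = 9 := by
      simp [Nat.card_eq_fintype_card]
    have hbij : Function.Bijective f :=
      (Nat.bijective_iff_injective_and_card f).mpr ⟨hinj, by rw [hcardP, hcardV]⟩
    intro v hv
    obtain ⟨p, hp⟩ := hbij.surjective ⟨v, hv⟩
    exact ⟨p, congrArg Subtype.val hp⟩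
  -- pointwise vector identities
  have e1 : ∀ v : Fin 4 → ZMod 3, v + a + a = v + (2 : ZMod 3) • a := fun v => funext fun i => by
    simp only [Pi.add_apply, Pi.smul_apply, smul_eq_mul]
    exact (by decide : ∀ x y : ZMod 3, x + y + y = x + 2 * y) _ _
  have e2 : ∀ v : Fin 4 → ZMod 3, v + a + (2 : ZMod 3) • a = v := fun v => funext fun i => by
    simp only [Pi.add_apply, Pi.smul_apply, smul_eq_mul]
    exact (by decide : ∀ x y : ZMod 3, x + y + 2 * y = x) _ _
  have e3 : ∀ v : Fin 4 → ZMod 3, v + (2 : ZMod 3) • a + a = v := fun v => funext fun i => by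
    simp only [Pi.add_apply, Pi.smul_apply, smul_eq_mul]
    exact (by decide : ∀ x y : ZMod 3, x + 2 * y + y = x) _ _
  have e4 : ∀ v : Fin 4 → ZMod 3, v + (2 : ZMod 3) • a + (2 : ZMod 3) • a = v + a :=
    fun v => funext fun i => by
    simp only [Pi.add_apply, Pi.smul_apply, smul_eq_mul]
    exact (by decide : ∀ x y : ZMod 3, x + 2 * y + 2 * y = x + y) _ _
  -- shift lemmas for cosets
  have shift1 : ∀ v : Fin 4 → ZMod 3,
      ({v + a, v + a + a, v + a + (2 : ZMod 3) • a} : Set (Fin 4 → ZMod 3)) =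
        {v, v + a, v + (2 : ZMod 3) • a} := by
    intro v
    rw [e1 v, e2 v]
    ext x
    simp only [Set.mem_insert_iff, Set.mem_singleton_iff]
    tauto
  have shift2 : ∀ v : Fin 4 → ZMod 3,
      ({v + (2 : ZMod 3) • a, v + (2 : ZMod 3) • a + a,
        v + (2 : ZMod 3) • a + (2 : ZMod 3) • a} : Set (Fin 4 → ZMod 3)) =
        {v, v + a, v + (2 : ZMod 3) • a} := by
    intro v
    rw [e3 v, e4 v]
    ext x
    simp only [Set.mem_insert_iff, Set.mem_singleton_iff]
    tauto
  have key : ∀ v x : Fin 4 → ZMod 3,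
      x ∈ ({v, v + a, v + (2 : ZMod 3) • a} : Set (Fin 4 → ZMod 3)) →
      ({x, x + a, x + (2 : ZMod 3) • a} : Set (Fin 4 → ZMod 3)) =
        {v, v + a, v + (2 : ZMod 3) • a} := by
    intro v x hx
    simp only [Set.mem_insert_iff, Set.mem_singleton_iff] at hx
    rcases hx with rfl | rfl | rfl
    · rfl
    · exact shift1 v
    · exact shift2 v
  -- distinct elements inside a coset
  have nea1 : ∀ v : Fin 4 → ZMod 3, v ≠ v + a := by
    intro v h
    apply hlam0
    funext i
    have hi := congrFun h i
    simp only [Pi.add_apply] at hi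
    exact (by decide : ∀ x y : ZMod 3, x = x + y → y = 0) (v i) (a i) hi
  have nea2 : ∀ v : Fin 4 → ZMod 3, v ≠ v + (2 : ZMod 3) • a := by
    intro v h
    apply hlam0
    funext i
    have hi := congrFun h i
    simp only [Pi.add_apply, Pi.smul_apply, smul_eq_mul] at hi
    exact (by decide : ∀ x y : ZMod 3, x = x + 2 * y → y = 0) (v i) (a i) hi
  have nea3 : ∀ v : Fin 4 → ZMod 3, v + a ≠ v + (2 : ZMod 3) • a := by
    intro v h
    apply hlam0
    funext i
    have hi := congrFun h i
    simp only [Pi.add_apply, Pi.smul_apply, smul_eq_mul] at hi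
    exact (by decide : ∀ x y : ZMod 3, x + y = x + 2 * y → y = 0) (v i) (a i) hi
  -- each coset in the family is {b•μ, b•μ+a, b•μ+2a} for some b
  have hcosetrep : ∀ v ∈ V₂, ∃ c : ZMod 3,
      ({v, v + a, v + (2 : ZMod 3) • a} : Set (Fin 4 → ZMod 3)) =
        {c • μ, c • μ + a, c • μ + (2 : ZMod 3) • a} := by
    intro v hv
    obtain ⟨p, hp⟩ := hrep v hv
    have hc := hZ3 p.1
    rcases hc with h | h | h
    · refine ⟨p.2, ?_⟩
      rw [← hp, h, zero_smul, zero_add]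
    · refine ⟨p.2, ?_⟩
      have hv' : v = p.2 • μ + a := by rw [← hp, h, one_smul, add_comm]
      rw [hv']
      exact shift1 (p.2 • μ)
    · refine ⟨p.2, ?_⟩
      have hv' : v = p.2 • μ + (2 : ZMod 3) • a := by rw [← hp, h, add_comm]
      rw [hv']
      exact shift2 (p.2 • μ)
  -- the three distinct cosets
  set T : ZMod 3 → Set (Fin 4 → ZMod 3) := fun c =>
    {c • μ, c • μ + a, c • μ + (2 : ZMod 3) • a} with hT
  have hμspan : ∀ z : Fin 4 → ZMod 3, z ∈ Submodule.span (ZMod 3) {a} → μ ≠ z := by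
    intro z hz h
    exact hμ (h ▸ hz)
  have hspan0 : (0 : Fin 4 → ZMod 3) ∈ Submodule.span (ZMod 3) {a} := zero_mem _
  have hspana : a ∈ Submodule.span (ZMod 3) {a} := Submodule.mem_span_singleton_self a
  have hspan2a : (2 : ZMod 3) • a ∈ Submodule.span (ZMod 3) {a} :=
    Submodule.smul_mem _ _ hspana
  have hdbl : ∀ z : Fin 4 → ZMod 3, (2 : ZMod 3) • ((2 : ZMod 3) • z) = z := by
    intro z
    funext i
    simp only [Pi.smul_apply, smul_eq_mul]
    exact (by decide : ∀ x : ZMod 3, 2 * (2 * x) = x) (z i)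
  have hT01 : T 0 ≠ T 1 := by
    intro h
    have h1m : (1 : ZMod 3) • μ ∈ T 1 := Set.mem_insert _ _
    rw [← h] at h1m
    simp only [hT, Set.mem_insert_iff, Set.mem_singleton_iff, one_smul, zero_smul,
      zero_add] at h1m
    rcases h1m with h | h | h
    · exact hμspan 0 hspan0 h
    · exact hμspan a hspana h
    · exact hμspan _ hspan2a h
  have hT02 : T 0 ≠ T 2 := by
    intro h
    have h2m : (2 : ZMod 3) • μ ∈ T 2 := Set.mem_insert _ _
    rw [← h] at h2m
    simp only [hT, Set.mem_insert_iff, Set.mem_singleton_iff, zero_smul, zero_add] at h2m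
    have hμ2 : ∀ z, (2 : ZMod 3) • μ = z → μ = (2 : ZMod 3) • z := by
      intro z hz; rw [← hz, hdbl]
    rcases h2m with h | h | h
    · have := hμ2 _ h
      exact hμspan _ (Submodule.smul_mem _ _ hspan0) this
    · have := hμ2 _ h
      exact hμspan _ (Submodule.smul_mem _ _ hspana) this
    · have := hμ2 _ h
      exact hμspan _ (Submodule.smul_mem _ _ hspan2a) this
  have hT12 : T 1 ≠ T 2 := by
    intro h
    have h2m : (2 : ZMod 3) • μ ∈ T 2 := Set.mem_insert _ _
    rw [← h] at h2m
    simp only [hT, Set.mem_insert_iff, Set.mem_singleton_iff, one_smul] at h2m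
    rcases h2m with h | h | h
    · have : μ = 0 := by
        funext i
        have hi := congrFun h i
        simp only [Pi.smul_apply, smul_eq_mul] at hi
        exact (by decide : ∀ x : ZMod 3, 2 * x = x → x = 0) (μ i) hi
      exact hμspan 0 hspan0 this
    · have : μ = a := by
        funext i
        have hi := congrFun h i
        simp only [Pi.smul_apply, Pi.add_apply, smul_eq_mul] at hi
        exact (by decide : ∀ x y : ZMod 3, 2 * x = x + y → x = y) (μ i) (a i) hi
      exact hμspan a hspana this
    · have : μ = (2 : ZMod 3) • a := by
        funext i
        have hi := congrFun h i
        simp only [Pi.smul_apply, Pi.add_apply, smul_eq_mul] at hi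
        exact (by decide : ∀ x y : ZMod 3, 2 * x = x + 2 * y → x = 2 * y) (μ i) (a i) hi
      exact hμspan _ hspan2a this
  have hC : {s : Set (Fin 4 → ZMod 3) | ∃ v ∈ V₂, s = {v, v + a, v + (2 : ZMod 3) • a}} =
      ({T 0, T 1, T 2} : Set (Set (Fin 4 → ZMod 3))) := by
    ext s
    simp only [Set.mem_setOf_eq, Set.mem_insert_iff, Set.mem_singleton_iff]
    constructor
    · rintro ⟨v, hv, rfl⟩
      obtain ⟨c, hc⟩ := hcosetrep v hv
      have hc3 := hZ3 c
      rcases hc3 with rfl | rfl | rfl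
      · exact Or.inl hc
      · exact Or.inr (Or.inl hc)
      · exact Or.inr (Or.inr hc)
    · rintro (rfl | rfl | rfl)
      · exact ⟨(0 : ZMod 3) • μ, V₂.smul_mem _ hμV, rfl⟩
      · exact ⟨(1 : ZMod 3) • μ, V₂.smul_mem _ hμV, rfl⟩
      · exact ⟨(2 : ZMod 3) • μ, V₂.smul_mem _ hμV, rfl⟩
  refine ⟨a, haV, hwt, hne2, hset2, ?_, ?_, ?_, ?_⟩
  · -- Nat.card of the coset family = 3
    rw [hC, Nat.card_coe_set_eq]
    exact Set.ncard_eq_three.mpr ⟨T 0, T 1, T 2, hT01, hT02, hT12, rfl⟩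
  · -- each coset: card 3, subset, distances
    rintro s ⟨v, hv, rfl⟩
    refine ⟨?_, ?_, ?_⟩
    · rw [Nat.card_coe_set_eq]
      exact Set.ncard_eq_three.mpr ⟨v, v + a, v + (2 : ZMod 3) • a, nea1 v, nea2 v, nea3 v, rfl⟩
    · intro x hx
      simp only [Set.mem_insert_iff, Set.mem_singleton_iff] at hx
      rcases hx with rfl | rfl | rfl
      · exact hv
      · exact V₂.add_mem hv haV
      · exact V₂.add_mem hv (V₂.smul_mem _ haV)
    · intro ρ hρ σ hσ hρσ
      simp only [Set.mem_insert_iff, Set.mem_singleton_iff] at hρ hσ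
      have da : ∀ x y : Fin 4 → ZMod 3, (∀ i, x i - y i = a i) → wt (x - y) = 3 := by
        intro x y h
        have : x - y = a := funext fun i => by rw [Pi.sub_apply]; exact h i
        rw [this]; exact hwt
      have d2a : ∀ x y : Fin 4 → ZMod 3, (∀ i, x i - y i = 2 * a i) → wt (x - y) = 3 := by
        intro x y h
        have : x - y = (2 : ZMod 3) • a := funext fun i => by
          rw [Pi.sub_apply, Pi.smul_apply, smul_eq_mul]; exact h i
        rw [this]; exact hwt2a
      rcases hρ with rfl | rfl | rfl <;> rcases hσ with rfl | rfl | rfl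
      · exact absurd rfl hρσ
      · exact d2a _ _ fun i => by
          simp only [Pi.add_apply]
          exact (by decide : ∀ x y : ZMod 3, x - (x + y) = 2 * y) _ _
      · exact da _ _ fun i => by
          simp only [Pi.add_apply, Pi.smul_apply, smul_eq_mul]
          exact (by decide : ∀ x y : ZMod 3, x - (x + 2 * y) = y) _ _
      · exact da _ _ fun i => by
          simp only [Pi.add_apply]
          exact (by decide : ∀ x y : ZMod 3, x + y - x = y) _ _
      · exact absurd rfl hρσ
      · exact d2a _ _ fun i => by
          simp only [Pi.add_apply, Pi.smul_apply, smul_eq_mul]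
          exact (by decide : ∀ x y : ZMod 3, x + y - (x + 2 * y) = 2 * y) _ _
      · exact d2a _ _ fun i => by
          simp only [Pi.add_apply, Pi.smul_apply, smul_eq_mul]
          exact (by decide : ∀ x y : ZMod 3, x + 2 * y - x = 2 * y) _ _
      · exact da _ _ fun i => by
          simp only [Pi.add_apply, Pi.smul_apply, smul_eq_mul]
          exact (by decide : ∀ x y : ZMod 3, x + 2 * y - (x + y) = y) _ _
      · exact absurd rfl hρσ
  · -- union is V₂
    ext x
    constructor
    · rintro ⟨s, ⟨v, hv, rfl⟩, hx⟩
      simp only [Set.mem_insert_iff, Set.mem_singleton_iff] at hx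
      rcases hx with rfl | rfl | rfl
      · exact hv
      · exact V₂.add_mem hv haV
      · exact V₂.add_mem hv (V₂.smul_mem _ haV)
    · intro hx
      exact ⟨{x, x + a, x + (2 : ZMod 3) • a}, ⟨x, hx, rfl⟩, Set.mem_insert _ _⟩
  · -- pairwise disjoint
    rintro s t ⟨v, hv, rfl⟩ ⟨w, hw, rfl⟩ hst
    rw [Set.eq_empty_iff_forall_notMem]
    rintro x ⟨hxs, hxt⟩
    exact hst ((key v x hxs).symm.trans (key w x hxt))
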